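/- Let X be a weighted string of length n over a finite alphabet Σ and let H_X be a heavy string of X. Then for every string U of length j−i+1 (1 ≤ i ≤ j ≤ n), the occurrence probability of U at position i satisfies P(X[i..j] = U) ≤ 2^{−d_H(U, H_X[i..j])}, where d_H denotes Hamming distance. -/
import Mathlib


/-- For a weighted string `X` of length `n` (given by probability
distributions `X i` for each position `i < n`, 0-indexed) with heavy string `H`,
the occurrence probability of any string `U` of length `m` at position `i`
(with `i + m ≤ n`) is at most `2 ^ (- hammingDist U H[i..i+m-1])`,
i.e. `(1/2) ^ hammingDist U H[i..i+m-1]`. -/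
theorem occProb_le_half_pow_hammingDist {A : Type*} [Fintype A] [DecidableEq A]
    (n : ℕ) (X : ℕ → A → ℝ)
    (hX0 : ∀ i < n, ∀ a, 0 ≤ X i a)
    (hX1 : ∀ i < n, ∑ a, X i a = 1)
    (H : ℕ → A) (hH : ∀ i < n, ∀ a, X i a ≤ X i (H i))
    (i m : ℕ) (him : i + m ≤ n) (U : Fin m → A) :
    ∏ h : Fin m, X (i + h.val) (U h) ≤
      (1 / 2 : ℝ) ^ hammingDist U (fun h : Fin m => H (i + h.val)) := by
  have key : ∀ h : Fin m, X (i + h.val) (U h) ≤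
      if U h = H (i + h.val) then 1 else (1 / 2 : ℝ) := by
    intro h
    have hlt : i + h.val < n := lt_of_lt_of_le (by omega) him
    split_ifs with he
    · calc X (i + h.val) (U h) ≤ ∑ a, X (i + h.val) a :=
        Finset.single_le_sum (fun a _ => hX0 _ hlt a) (Finset.mem_univ _)
      _ = 1 := hX1 _ hlt
    · have h2 : X (i + h.val) (U h) + X (i + h.val) (H (i + h.val)) ≤
          ∑ a, X (i + h.val) a := by
        rw [← Finset.sum_pair he]
        exact Finset.sum_le_sum_of_subset_of_nonneg (Finset.subset_univ _)
          (fun a _ _ => hX0 _ hlt a)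
      have h3 := hH _ hlt (U h)
      rw [hX1 _ hlt] at h2
      linarith
  calc ∏ h : Fin m, X (i + h.val) (U h)
      ≤ ∏ h : Fin m, (if U h = H (i + h.val) then 1 else (1 / 2 : ℝ)) := by
        refine Finset.prod_le_prod (fun h _ => hX0 _ (lt_of_lt_of_le (by omega) him) _)
          (fun h _ => key h)
    _ = (1 / 2 : ℝ) ^ hammingDist U (fun h : Fin m => H (i + h.val)) := by
        rw [hammingDist, Finset.prod_ite, Finset.prod_const, Finset.prod_const,
          one_pow, one_mul]
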